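/- arXiv:2510.00074 — 2 statements merged into one kernel-verified Lean document; each statement's English description precedes it below -/
import Mathlib

section
/- Let n, m be positive integers with n ≢ m (mod 2). If d : ℝ → ℝ is an odd continuous function and g : ℝ → ℝ is an even continuous function, then for every a > 0, ∫_{−a}^{a} 𝓕ₙ(x) · 𝓕ₘ(x) dx = 0. -/
/-- Generalized Fibonacci polynomials of Fibonacci type:
`𝓕₀ = 0`, `𝓕₁ = 1`, `𝓕ₙ = d·𝓕ₙ₋₁ + g·𝓕ₙ₋₂`. -/
noncomputable def GFPF (d g : ℝ → ℝ) : ℕ → ℝ → ℝ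
  | 0 => fun _ => 0
  | 1 => fun _ => 1
  | n + 2 => fun x => d x * GFPF d g (n + 1) x + g x * GFPF d g n x

lemma gfpf_parity (d g : ℝ → ℝ) (hd : ∀ x, d (-x) = -d x) (hg : ∀ x, g (-x) = g x)
    (n : ℕ) (x : ℝ) : GFPF d g n (-x) = (-1 : ℝ) ^ (n + 1) * GFPF d g n x := by
  induction n using Nat.strong_induction_on with
  | _ n ih =>
    match n with
    | 0 => simp [GFPF]
    | 1 => simp [GFPF]
    | (k + 2) =>
      have h1 := ih (k + 1) (by omega)
      have h0 := ih k (by omega)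
      simp only [GFPF, hd, hg, h1, h0, pow_succ]
      ring

theorem gfpf_orthogonal_diff_parity (d g : ℝ → ℝ)
    (hdc : Continuous d) (hgc : Continuous g)
    (hd : ∀ x, d (-x) = -d x) (hg : ∀ x, g (-x) = g x)
    (n m : ℕ) (hn : 0 < n) (hm : 0 < m) (hnm : n % 2 ≠ m % 2)
    (a : ℝ) (ha : 0 < a) :
    ∫ x in (-a)..a, GFPF d g n x * GFPF d g m x = 0 := by
  set f : ℝ → ℝ := fun x => GFPF d g n x * GFPF d g m x with hf
  have hodd : ∀ x, f (-x) = -f x := by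
    intro x
    simp only [hf, gfpf_parity d g hd hg]
    have : (-1 : ℝ) ^ (n + 1) * ((-1 : ℝ) ^ (m + 1)) = -1 := by
      rw [← pow_add]
      have : (n + 1 + (m + 1)) % 2 = 1 := by omega
      rw [← Nat.div_add_mod (n + 1 + (m + 1)) 2, this, pow_add, pow_mul]
      norm_num
    calc (-1:ℝ)^(n+1) * GFPF d g n x * ((-1:ℝ)^(m+1) * GFPF d g m x)
        = ((-1:ℝ)^(n+1) * ((-1:ℝ)^(m+1))) * (GFPF d g n x * GFPF d g m x) := by ring
      _ = -(GFPF d g n x * GFPF d g m x) := by rw [this]; ring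
  have h := intervalIntegral.integral_comp_neg (a := -a) (b := a) f
  simp only [neg_neg] at h
  have h2 : (∫ x in (-a)..a, f (-x)) = -∫ x in (-a)..a, f x := by
    simp only [hodd]
    exact intervalIntegral.integral_neg
  rw [h2] at h
  linarith
end

section
/- Let d(x) = a·x + b with a, b ∈ ℝ, let γ > 0 be a real number, and let g be the constant function g(x) = γ. Then there is no Borel measure μ on ℝ with μ ≠ 0 that makes the sequence (𝓕ₙ) orthogonal: indeed, for all odd positive integers n, m and every nonzero Borel measure μ on ℝ such that the function x ↦ 𝓕ₙ(x)·𝓕ₘ(x) is μ-integrable, one has ∫_ℝ 𝓕ₙ(x)·𝓕ₘ(x) dμ(x) > 0. In particular there is no nonzero Borel measure μ such that 𝓕ₙ·𝓕ₘ is μ-integrable with ∫_ℝ 𝓕ₙ·𝓕ₘ dμ = 0 for all n ≠ m. -/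
open MeasureTheory

lemma gfpf_aux (a b γ : ℝ) (hγ : 0 < γ) (x : ℝ) : ∀ k : ℕ,
    γ ^ k ≤ GFPF (fun x => a * x + b) (fun _ => γ) (2 * k + 1) x ∧
    0 ≤ (a * x + b) * GFPF (fun x => a * x + b) (fun _ => γ) (2 * k) x := by
  intro k
  induction k with
  | zero => simp [GFPF]
  | succ k ih =>
    obtain ⟨h1, h2⟩ := ih
    have e1 : 2 * (k + 1) + 1 = (2 * k + 1) + 2 := by ring
    have e2 : 2 * (k + 1) = 2 * k + 2 := by ring
    rw [e1, e2]
    constructor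
    · show γ ^ (k + 1) ≤ (a * x + b) * GFPF _ _ (2 * k + 2) x +
        γ * GFPF _ _ (2 * k + 1) x
      have : (a * x + b) * GFPF (fun x => a * x + b) (fun _ => γ) (2 * k + 2) x
          = (a * x + b) ^ 2 * GFPF (fun x => a * x + b) (fun _ => γ) (2 * k + 1) x
            + γ * ((a * x + b) * GFPF (fun x => a * x + b) (fun _ => γ) (2 * k) x) := by
        show (a * x + b) * ((a * x + b) * _ + γ * _) = _
        ring
      rw [this]
      have hF : (0:ℝ) ≤ GFPF (fun x => a * x + b) (fun _ => γ) (2 * k + 1) x :=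
        le_trans (pow_nonneg hγ.le k) h1
      have h3 : γ * γ ^ k ≤ γ * GFPF (fun x => a * x + b) (fun _ => γ) (2 * k + 1) x :=
        mul_le_mul_of_nonneg_left h1 hγ.le
      have h4 : 0 ≤ (a * x + b) ^ 2 * GFPF (fun x => a * x + b) (fun _ => γ) (2 * k + 1) x :=
        mul_nonneg (sq_nonneg _) hF
      have h5 : 0 ≤ γ * ((a * x + b) * GFPF (fun x => a * x + b) (fun _ => γ) (2 * k) x) :=
        mul_nonneg hγ.le h2
      rw [pow_succ]
      linarith
    · show 0 ≤ (a * x + b) * ((a * x + b) * GFPF _ _ (2 * k + 1) x + γ * GFPF _ _ (2 * k) x)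
      have hF : (0:ℝ) ≤ GFPF (fun x => a * x + b) (fun _ => γ) (2 * k + 1) x :=
        le_trans (pow_nonneg hγ.le k) h1
      nlinarith [sq_nonneg (a * x + b)]

lemma gfpf_odd_pos (a b γ : ℝ) (hγ : 0 < γ) (n : ℕ) (hn : Odd n) (x : ℝ) :
    0 < GFPF (fun x => a * x + b) (fun _ => γ) n x := by
  obtain ⟨k, hk⟩ := hn
  have := (gfpf_aux a b γ hγ x k).1
  rw [hk]
  exact lt_of_lt_of_le (pow_pos hγ k) this

theorem gfpf_not_orthogonal_linear_positive (a b γ : ℝ) (hγ : 0 < γ) :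
    (∀ n m : ℕ, 0 < n → 0 < m → Odd n → Odd m →
      ∀ μ : Measure ℝ, μ ≠ 0 →
        Integrable
          (fun x => GFPF (fun x => a * x + b) (fun _ => γ) n x *
            GFPF (fun x => a * x + b) (fun _ => γ) m x) μ →
        0 < ∫ x, GFPF (fun x => a * x + b) (fun _ => γ) n x *
              GFPF (fun x => a * x + b) (fun _ => γ) m x ∂μ) ∧
    ¬ ∃ μ : Measure ℝ, μ ≠ 0 ∧
        ∀ n m : ℕ, 0 < n → 0 < m → n ≠ m →
          Integrable
            (fun x => GFPF (fun x => a * x + b) (fun _ => γ) n x *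
              GFPF (fun x => a * x + b) (fun _ => γ) m x) μ ∧
          ∫ x, GFPF (fun x => a * x + b) (fun _ => γ) n x *
              GFPF (fun x => a * x + b) (fun _ => γ) m x ∂μ = 0 := by
  have key : ∀ n m : ℕ, 0 < n → 0 < m → Odd n → Odd m →
      ∀ μ : Measure ℝ, μ ≠ 0 →
        Integrable
          (fun x => GFPF (fun x => a * x + b) (fun _ => γ) n x *
            GFPF (fun x => a * x + b) (fun _ => γ) m x) μ →
        0 < ∫ x, GFPF (fun x => a * x + b) (fun _ => γ) n x *
              GFPF (fun x => a * x + b) (fun _ => γ) m x ∂μ := by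
    intro n m _ _ hn hm μ hμ hint
    have hpos : ∀ x, 0 < GFPF (fun x => a * x + b) (fun _ => γ) n x *
        GFPF (fun x => a * x + b) (fun _ => γ) m x := fun x =>
      mul_pos (gfpf_odd_pos a b γ hγ n hn x) (gfpf_odd_pos a b γ hγ m hm x)
    rw [integral_pos_iff_support_of_nonneg (fun x => (hpos x).le) hint]
    have : Function.support (fun x => GFPF (fun x => a * x + b) (fun _ => γ) n x *
        GFPF (fun x => a * x + b) (fun _ => γ) m x) = Set.univ := by
      ext x
      simp only [Function.mem_support, Set.mem_univ, iff_true]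
      exact (hpos x).ne'
    rw [this]
    simpa [Measure.measure_univ_pos] using hμ
  refine ⟨key, ?_⟩
  rintro ⟨μ, hμ, h⟩
  obtain ⟨hint, hzero⟩ := h 1 3 one_pos (by norm_num) (by norm_num)
  have := key 1 3 one_pos (by norm_num) ⟨0, by norm_num⟩ ⟨1, by norm_num⟩ μ hμ hint
  exact absurd hzero this.ne'
end
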